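/- If M is a linear lambda term and M beta-eta-reduces to N, then N is also a linear lambda term. -/

import Mathlib

inductive Tm : Type
  | var : ℕ → Tm
  | app : Tm → Tm → Tm
  | lam : ℕ → Tm → Tm
  deriving DecidableEq

namespace Tm

/-- number of free occurrences of variable `x` in a term -/
def countFree (x : ℕ) : Tm → ℕ
  | var y => if y = x then 1 else 0
  | app M N => countFree x M + countFree x N
  | lam y N => if y = x then 0 else countFree x N

/-- every abstraction in the term binds exactly one occurrence of its variable -/
def LinearBody : Tm → Prop
  | var _ => True
  | app M N => LinearBody M ∧ LinearBody N
  | lam y N => LinearBody N ∧ countFree y N = 1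

/-- A linear lambda term: every abstraction binds exactly one occurrence,
and every free variable occurs exactly once. -/
def Linear (M : Tm) : Prop := LinearBody M ∧ ∀ x, countFree x M ≤ 1

/-- `y` occurs as a binder somewhere in the term -/
def Binds (y : ℕ) : Tm → Prop
  | var _ => False
  | app M N => Binds y M ∨ Binds y N
  | lam z M => z = y ∨ Binds y M

def subst (x : ℕ) (N : Tm) : Tm → Tm
  | var y => if y = x then N else var y
  | app P Q => app (subst x N P) (subst x N Q)
  | lam y P => if y = x then lam y P else lam y (subst x N P)

/-- one-step beta-eta reduction -/
inductive Step : Tm → Tm → Prop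
  | beta (x : ℕ) (M N : Tm) : (∀ y, countFree y N ≠ 0 → ¬ Binds y M) →
      Step (app (lam x M) N) (subst x N M)
  | eta (x : ℕ) (M : Tm) : countFree x M = 0 → Step (lam x (app M (var x))) M
  | appL {M M' : Tm} (N : Tm) : Step M M' → Step (app M N) (app M' N)
  | appR (M : Tm) {N N' : Tm} : Step N N' → Step (app M N) (app M N')
  | xi (y : ℕ) {M M' : Tm} : Step M M' → Step (lam y M) (lam y M')

/-- many-step beta-eta reduction -/
def Reduces : Tm → Tm → Prop := Relation.ReflTransGen Step

/-- beta-eta convertibility -/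
def BetaEtaEq : Tm → Tm → Prop := Relation.EqvGen Step

lemma countFree_subst (y : ℕ) (N : Tm) :
    ∀ (M : Tm), (∀ z, countFree z N ≠ 0 → ¬ Binds z M) → ∀ x,
      countFree x (subst y N M) =
        (if x = y then 0 else countFree x M) + countFree y M * countFree x N := by
  intro M
  induction M with
  | var w =>
    intro _ x
    by_cases hwy : w = y
    · subst hwy
      by_cases hxw : x = w
      · subst hxw; simp [subst, countFree]
      · simp [subst, countFree, hxw, Ne.symm hxw]
    · by_cases hxy : x = y
      · simp [subst, countFree, hwy, hxy, show w ≠ x from fun h => hwy (h.trans hxy)]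
      · simp [subst, countFree, hwy, hxy]
  | app P Q ihP ihQ =>
    intro h x
    have hP := ihP (fun z hz => fun hb => h z hz (Or.inl hb)) x
    have hQ := ihQ (fun z hz => fun hb => h z hz (Or.inr hb)) x
    simp only [subst, countFree, hP, hQ]
    by_cases hxy : x = y <;> simp [hxy] <;> ring
  | lam z P ih =>
    intro h x
    by_cases hzy : z = y
    · subst hzy
      simp only [subst, if_pos rfl, countFree]
      by_cases hxz : x = z <;> simp [hxz, if_pos rfl, countFree]
    · have hP := ih (fun w hw => fun hb => h w hw (Or.inr hb))
      simp only [subst, if_neg hzy, countFree]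
      by_cases hzx : z = x
      · subst hzx
        have hN : countFree z N = 0 := by
          by_contra hne
          exact h z hne (Or.inl rfl)
        simp [hN, Ne.symm hzy]
      · simp only [if_neg hzx, hP x, if_neg hzy]

lemma linBody_subst (y : ℕ) (N : Tm) (hN : LinearBody N) :
    ∀ M : Tm, LinearBody M → (∀ z, countFree z N ≠ 0 → ¬ Binds z M) →
      LinearBody (subst y N M) := by
  intro M
  induction M with
  | var w =>
    intro _ _
    by_cases hwy : w = y <;> simp [subst, hwy, hN, LinearBody]
  | app P Q ihP ihQ =>
    intro hM h
    exact ⟨ihP hM.1 (fun z hz hb => h z hz (Or.inl hb)),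
           ihQ hM.2 (fun z hz hb => h z hz (Or.inr hb))⟩
  | lam z P ih =>
    intro hM h
    by_cases hzy : z = y
    · simpa [subst, hzy] using hM
    · have hNz : countFree z N = 0 := by
        by_contra hne
        exact h z hne (Or.inl rfl)
      have hb := ih hM.1 (fun w hw hb => h w hw (Or.inr hb))
      have hc := countFree_subst y N P (fun w hw hb => h w hw (Or.inr hb)) z
      simp only [subst, if_neg hzy, LinearBody]
      refine ⟨hb, ?_⟩
      rw [hc, hNz, if_neg (fun he => hzy he), Nat.mul_zero, Nat.add_zero]
      exact hM.2

lemma step_linBody_count {M M' : Tm} (s : Step M M') (hM : LinearBody M) :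
    LinearBody M' ∧ ∀ z, countFree z M' = countFree z M := by
  induction s with
  | beta x P N h =>
    obtain ⟨⟨hP, hx⟩, hN⟩ := hM
    refine ⟨linBody_subst x N hN P hP h, fun z => ?_⟩
    rw [countFree_subst x N P h z, hx, Nat.one_mul, countFree, countFree]
    by_cases hz : z = x
    · simp [hz]
    · rw [if_neg hz, if_neg (show ¬ x = z from fun he => hz he.symm)]
  | eta x P h =>
    obtain ⟨⟨hP, _⟩, hx⟩ := hM
    refine ⟨hP, fun z => ?_⟩
    by_cases hz : x = z
    · subst hz; simp [countFree, h]
    · simp [countFree, hz]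
  | appL N s ih =>
    obtain ⟨hP, hN⟩ := hM
    obtain ⟨h1, h2⟩ := ih hP
    exact ⟨⟨h1, hN⟩, fun z => by simp [countFree, h2 z]⟩
  | appR P s ih =>
    obtain ⟨hP, hN⟩ := hM
    obtain ⟨h1, h2⟩ := ih hN
    exact ⟨⟨hP, h1⟩, fun z => by simp [countFree, h2 z]⟩
  | xi y s ih =>
    obtain ⟨hP, hy⟩ := hM
    obtain ⟨h1, h2⟩ := ih hP
    refine ⟨⟨h1, by rw [h2 y]; exact hy⟩, fun z => ?_⟩
    by_cases hz : y = z <;> simp [countFree, hz, h2 z]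

lemma step_linear {M M' : Tm} (s : Step M M') (hM : Linear M) : Linear M' := by
  obtain ⟨h1, h2⟩ := step_linBody_count s hM.1
  exact ⟨h1, fun x => (h2 x).le.trans (hM.2 x)⟩

end Tm

theorem linear_preserved_by_betaEta_reduction (M N : Tm)
    (hM : Tm.Linear M) (h : Tm.Reduces M N) : Tm.Linear N := by
  induction h with
  | refl => exact hM
  | tail _ s ih => exact Tm.step_linear s ih
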